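/- In the presented group Gr⟨2,3,5⟩ = ⟨a, b, c ∣ a² = b³, b³ = c⁵, c⁵ = abc⟩, the image of the element a² lies in the center. -/

import Mathlib

/-- Relators of `Gr⟨2,3,5⟩ = ⟨a, b, c ∣ a² = b³, b³ = c⁵, c⁵ = abc⟩`,
with `a = 0`, `b = 1`, `c = 2`. -/
def relsGr235 : Set (FreeGroup (Fin 3)) :=
  {FreeGroup.of 0 ^ 2 * (FreeGroup.of 1 ^ 3)⁻¹,
   FreeGroup.of 1 ^ 3 * (FreeGroup.of 2 ^ 5)⁻¹,
   FreeGroup.of 2 ^ 5 * (FreeGroup.of 0 * FreeGroup.of 1 * FreeGroup.of 2)⁻¹}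

lemma rel_eq {rels : Set (FreeGroup (Fin 3))} {r s : FreeGroup (Fin 3)}
    (h : r * s⁻¹ ∈ rels) :
    (QuotientGroup.mk r : PresentedGroup rels) = QuotientGroup.mk s := by
  have h1 : (QuotientGroup.mk (r * s⁻¹) : PresentedGroup rels) = 1 := by
    rw [QuotientGroup.eq_one_iff]
    exact Subgroup.subset_normalClosure h
  rw [QuotientGroup.mk_mul, QuotientGroup.mk_inv] at h1
  exact eq_of_mul_inv_eq_one h1

/-- In `Gr⟨2,3,5⟩`, the element `a²` is central. -/
theorem stmt_6 :
    (PresentedGroup.of 0 : PresentedGroup relsGr235) ^ 2 ∈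
      Subgroup.center (PresentedGroup relsGr235) := by
  set a := (PresentedGroup.of 0 : PresentedGroup relsGr235)
  set b := (PresentedGroup.of 1 : PresentedGroup relsGr235)
  set c := (PresentedGroup.of 2 : PresentedGroup relsGr235)
  have hab : a ^ 2 = b ^ 3 := by
    have := rel_eq (rels := relsGr235) (r := FreeGroup.of 0 ^ 2) (s := FreeGroup.of 1 ^ 3)
      (by left; rfl)
    simp only [QuotientGroup.mk_pow] at this
    exact this
  have hbc : b ^ 3 = c ^ 5 := by
    have := rel_eq (rels := relsGr235) (r := FreeGroup.of 1 ^ 3) (s := FreeGroup.of 2 ^ 5)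
      (by right; left; rfl)
    simp only [QuotientGroup.mk_pow] at this
    exact this
  rw [Subgroup.mem_center_iff]
  intro g
  have hgen : g ∈ Subgroup.closure (Set.range (PresentedGroup.of : Fin 3 → PresentedGroup relsGr235)) := by
    rw [PresentedGroup.closure_range_of]; trivial
  induction hgen using Subgroup.closure_induction with
  | mem x hx =>
      obtain ⟨i, rfl⟩ := hx
      fin_cases i
      · show a * a ^ 2 = a ^ 2 * a
        group
      · show b * a ^ 2 = a ^ 2 * b
        rw [hab]; group
      · show c * a ^ 2 = a ^ 2 * c
        rw [hab, hbc]; group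
  | one => simp
  | mul x y _ _ hx hy => rw [mul_assoc, hy, ← mul_assoc, hx, mul_assoc]
  | inv x _ hx => exact Commute.inv_left hx
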